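/- Let k ≥ 2 and let T_k be the complete tripartite graph K_{2^k+1, 2^{k-1}(2^k+1), 2^{k-1}(2^k-1)}. The characteristic polynomial of the distance matrix of T_k equals (λ+2)^{2^{2k}+2^k-2} · [λ³ + (4 − 2^{2k+1} − 2^{k+1})λ² + (4 + 3·2^{4k-2} + 3·2^{3k} − 23·2^{2k-2} − 2^{k+3})λ + (−2^{5k} + 2^{4k-1} + 7·2^{3k} − 5·2^{2k-1} − 2^{k+3})]. Consequently, the distance spectrum of T_k consists of −2 with multiplicity 2^{2k}+2^k−2 together with the three roots of the displayed cubic. -/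

import Mathlib

open Polynomial

/-- The part of a vertex of `Fin a ⊕ Fin b ⊕ Fin c`. -/
def tripart {a b c : ℕ} : Fin a ⊕ Fin b ⊕ Fin c → Fin 3
  | Sum.inl _ => 0
  | Sum.inr (Sum.inl _) => 1
  | Sum.inr (Sum.inr _) => 2

/-- The complete tripartite graph `K_{a,b,c}`. -/
def completeTripartiteGraph (a b c : ℕ) : SimpleGraph (Fin a ⊕ Fin b ⊕ Fin c) where
  Adj u v := tripart u ≠ tripart v
  symm := ⟨fun _ _ h => h.symm⟩
  loopless := ⟨fun _ h => h rfl⟩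

/-- The distance matrix of a graph. -/
noncomputable def distMatrix {V : Type*} [Fintype V] (G : SimpleGraph V) : Matrix V V ℝ :=
  Matrix.of fun u v => (G.dist u v : ℝ)

/-- The co-centralizer graph of `PSL(2, 2^k)`:
the complete tripartite graph `K_{2^k+1, 2^{k-1}(2^k+1), 2^{k-1}(2^k-1)}`. -/
def pslGraph (k : ℕ) :=
  completeTripartiteGraph (2 ^ k + 1) (2 ^ (k - 1) * (2 ^ k + 1)) (2 ^ (k - 1) * (2 ^ k - 1))

/- ### Auxiliary lemmas -/

open Matrix in
lemma aux_field_det_factor {m p K : Type*} [Fintype m] [DecidableEq m] [Fintype p]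
    [DecidableEq p] [Field K] (t : K) (ht : t ≠ 0) (A : Matrix m p K) (B : Matrix p m K) :
    t ^ Fintype.card p * (t • (1 : Matrix m m K) - A * B).det =
      t ^ Fintype.card m * (t • (1 : Matrix p p K) - B * A).det := by
  have hA : t • (1 : Matrix m m K) - A * B = t • ((1 : Matrix m m K) - (t⁻¹ • A) * B) := by
    rw [smul_sub, Matrix.smul_mul, smul_smul, mul_inv_cancel₀ ht, one_smul]
  have hB : t • (1 : Matrix p p K) - B * A = t • ((1 : Matrix p p K) - B * (t⁻¹ • A)) := by
    rw [smul_sub, Matrix.mul_smul, smul_smul, mul_inv_cancel₀ ht, one_smul]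
  rw [hA, hB, det_smul, det_smul, det_one_sub_mul_comm]
  ring

open Matrix in
lemma aux_poly_det_factor {m p : Type*} [Fintype m] [DecidableEq m] [Fintype p] [DecidableEq p]
    (t : ℝ[X]) (ht : t ≠ 0) (A : Matrix m p ℝ[X]) (B : Matrix p m ℝ[X]) :
    t ^ Fintype.card p * (t • (1 : Matrix m m ℝ[X]) - A * B).det =
      t ^ Fintype.card m * (t • (1 : Matrix p p ℝ[X]) - B * A).det := by
  let K := FractionRing ℝ[X]
  let f : ℝ[X] →+* K := algebraMap ℝ[X] K
  have hinj : Function.Injective f := IsFractionRing.injective _ _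
  apply hinj
  have key1 : f ((t • (1 : Matrix m m ℝ[X]) - A * B).det) =
      ((f t) • (1 : Matrix m m K) - (A.map f) * (B.map f)).det := by
    rw [RingHom.map_det]
    congr 1
    ext i j
    by_cases h : i = j <;>
      simp [Matrix.map_apply, Matrix.sub_apply, Matrix.smul_apply, Matrix.one_apply,
        Matrix.mul_apply, map_sub, _root_.map_mul, map_sum, h, smul_eq_mul]
  have key2 : f ((t • (1 : Matrix p p ℝ[X]) - B * A).det) =
      ((f t) • (1 : Matrix p p K) - (B.map f) * (A.map f)).det := by
    rw [RingHom.map_det]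
    congr 1
    ext i j
    by_cases h : i = j <;>
      simp [Matrix.map_apply, Matrix.sub_apply, Matrix.smul_apply, Matrix.one_apply,
        Matrix.mul_apply, map_sub, _root_.map_mul, map_sum, h, smul_eq_mul]
  have hft : f t ≠ 0 := (map_ne_zero_iff f hinj).mpr ht
  rw [_root_.map_mul, _root_.map_mul, map_pow, map_pow, key1, key2]
  exact aux_field_det_factor (f t) hft _ _

open Matrix in
lemma aux_poly_det_factor' {m : Type*} [Fintype m] [DecidableEq m]
    (t : ℝ[X]) (ht : t ≠ 0) (h3 : 3 ≤ Fintype.card m)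
    (A : Matrix m (Fin 3) ℝ[X]) (B : Matrix (Fin 3) m ℝ[X]) :
    (t • (1 : Matrix m m ℝ[X]) - A * B).det =
      t ^ (Fintype.card m - 3) * (t • (1 : Matrix (Fin 3) (Fin 3) ℝ[X]) - B * A).det := by
  have h := aux_poly_det_factor t ht A B
  rw [Fintype.card_fin] at h
  have hpow : t ^ Fintype.card m = t ^ 3 * t ^ (Fintype.card m - 3) := by
    rw [← pow_add]; congr 1; omega
  rw [hpow, mul_assoc] at h
  exact mul_left_cancel₀ (pow_ne_zero 3 ht) h

lemma tripartite_dist {a b c : ℕ} (ha : 0 < a) (hb : 0 < b) (u v : Fin a ⊕ Fin b ⊕ Fin c) :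
    (completeTripartiteGraph a b c).dist u v =
      if u = v then 0 else if tripart u = tripart v then 2 else 1 := by
  by_cases huv : u = v
  · simp [huv]
  by_cases htp : tripart u = tripart v
  · simp only [huv, htp, if_false, if_true, if_pos rfl]
    obtain ⟨w, hw⟩ : ∃ w : Fin a ⊕ Fin b ⊕ Fin c, tripart w ≠ tripart u := by
      by_cases h0 : tripart u = 0
      · exact ⟨Sum.inr (Sum.inl ⟨0, hb⟩), by rw [h0]; simp [tripart]⟩
      · exact ⟨Sum.inl ⟨0, ha⟩, by simpa [tripart] using Ne.symm h0⟩
    have h1 : (completeTripartiteGraph a b c).Adj u w := fun h => hw h.symm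
    have h2 : (completeTripartiteGraph a b c).Adj w v := by
      intro h; exact hw (h.trans htp.symm)
    let p : (completeTripartiteGraph a b c).Walk u v :=
      SimpleGraph.Walk.cons h1 (SimpleGraph.Walk.cons h2 SimpleGraph.Walk.nil)
    have hle : (completeTripartiteGraph a b c).dist u v ≤ 2 := by
      simpa [p] using SimpleGraph.dist_le p
    have hne1 : (completeTripartiteGraph a b c).dist u v ≠ 1 := by
      intro h
      exact (SimpleGraph.dist_eq_one_iff_adj.mp h) htp
    have hne0 : (completeTripartiteGraph a b c).dist u v ≠ 0 := by
      intro h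
      rcases SimpleGraph.dist_eq_zero_iff_eq_or_not_reachable.mp h with h' | h'
      · exact huv h'
      · exact h' ⟨p⟩
    omega
  · simp only [huv, htp, if_false]
    exact SimpleGraph.dist_eq_one_iff_adj.mpr htp


noncomputable def Umat (a b c : ℕ) : Matrix (Fin a ⊕ Fin b ⊕ Fin c) (Fin 3) ℝ[X] :=
  Matrix.of fun u i => if tripart u = i then 1 else 0

noncomputable def Wmat (a b c : ℕ) : Matrix (Fin 3) (Fin a ⊕ Fin b ⊕ Fin c) ℝ[X] :=
  Matrix.of fun i v => 1 + if tripart v = i then 1 else 0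

lemma tripartite_charpoly (a b c : ℕ) (ha : 0 < a) (hb : 0 < b) (hcard : 3 ≤ a + b + c) :
    (distMatrix (completeTripartiteGraph a b c)).charpoly =
      (X + C 2) ^ (a + b + c - 3) *
        ((X + C 2) ^ 3 - 2 * ((a : ℝ[X]) + (b : ℝ[X]) + (c : ℝ[X])) * (X + C 2) ^ 2 +
          3 * ((a : ℝ[X]) * (b : ℝ[X]) + (a : ℝ[X]) * (c : ℝ[X]) + (b : ℝ[X]) * (c : ℝ[X])) *
            (X + C 2) - 4 * ((a : ℝ[X]) * (b : ℝ[X]) * (c : ℝ[X]))) := by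
  classical
  have hsum : ∀ s tt : Fin 3,
      (∑ i : Fin 3, (if s = i then (1 : ℝ[X]) else 0) * (1 + if tt = i then 1 else 0)) =
        1 + if s = tt then 1 else 0 := by
    intro s tt
    fin_cases s <;> fin_cases tt <;> simp [Fin.sum_univ_three]
  have hchar : Matrix.charmatrix (distMatrix (completeTripartiteGraph a b c)) =
      (X + C (2:ℝ)) • (1 : Matrix (Fin a ⊕ Fin b ⊕ Fin c) (Fin a ⊕ Fin b ⊕ Fin c) ℝ[X]) -
        Umat a b c * Wmat a b c := by
    refine Matrix.ext fun u v => ?_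
    rw [Matrix.charmatrix_apply, Matrix.sub_apply, Matrix.smul_apply, Matrix.mul_apply]
    simp only [Umat, Wmat, Matrix.of_apply, hsum]
    simp only [distMatrix, Matrix.of_apply, tripartite_dist ha hb]
    by_cases huv : u = v
    · subst huv
      simp [Matrix.diagonal_apply, Matrix.one_apply, smul_eq_mul, map_ofNat]
      ring
    · by_cases htp : tripart u = tripart v <;>
        simp [Matrix.diagonal_apply, huv, htp, Matrix.one_apply, smul_eq_mul, map_ofNat] <;>
        norm_num
  have hXC : (X + C (2:ℝ)) ≠ 0 := by
    intro h
    have := congrArg (Polynomial.eval 0) h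
    simp at this
  have hcardV : Fintype.card (Fin a ⊕ Fin b ⊕ Fin c) = a + b + c := by
    simp only [Fintype.card_sum, Fintype.card_fin]; omega
  have h3 : 3 ≤ Fintype.card (Fin a ⊕ Fin b ⊕ Fin c) := by rw [hcardV]; exact hcard
  have hWU : Wmat a b c * Umat a b c =
      !![2 * (a : ℝ[X]), (b : ℝ[X]), (c : ℝ[X]);
         (a : ℝ[X]), 2 * (b : ℝ[X]), (c : ℝ[X]);
         (a : ℝ[X]), (b : ℝ[X]), 2 * (c : ℝ[X])] := by
    refine Matrix.ext fun i j => ?_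
    rw [Matrix.mul_apply, Fintype.sum_sum_type, Fintype.sum_sum_type]
    simp only [Umat, Wmat, Matrix.of_apply, tripart, Finset.sum_const, Finset.card_univ,
      Fintype.card_fin, nsmul_eq_mul]
    fin_cases i <;> fin_cases j <;> simp [Matrix.vecHead, Matrix.vecTail] <;> ring
  have hM : (X + C (2:ℝ)) • (1 : Matrix (Fin 3) (Fin 3) ℝ[X]) -
      !![2 * (a : ℝ[X]), (b : ℝ[X]), (c : ℝ[X]);
         (a : ℝ[X]), 2 * (b : ℝ[X]), (c : ℝ[X]);
         (a : ℝ[X]), (b : ℝ[X]), 2 * (c : ℝ[X])] =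
      !![X + C 2 - 2 * (a : ℝ[X]), -(b : ℝ[X]), -(c : ℝ[X]);
         -(a : ℝ[X]), X + C 2 - 2 * (b : ℝ[X]), -(c : ℝ[X]);
         -(a : ℝ[X]), -(b : ℝ[X]), X + C 2 - 2 * (c : ℝ[X])] := by
    refine Matrix.ext fun i j => ?_
    fin_cases i <;> fin_cases j <;>
      simp [Matrix.one_apply, smul_eq_mul, Matrix.vecHead, Matrix.vecTail]
  have hcp : (distMatrix (completeTripartiteGraph a b c)).charpoly =
      (Matrix.charmatrix (distMatrix (completeTripartiteGraph a b c))).det := rfl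
  rw [hcp, hchar, aux_poly_det_factor' _ hXC h3, hcardV, hWU, hM]
  congr 1
  rw [Matrix.det_fin_three]
  simp only [Matrix.of_apply, Matrix.cons_val]
  ring

set_option maxHeartbeats 1000000 in
theorem psl_cocentralizer_distance_charpoly (k : ℕ) (hk : 2 ≤ k) :
    (distMatrix (pslGraph k)).charpoly =
      (X + C 2) ^ (2 ^ (2 * k) + 2 ^ k - 2) *
        (X ^ 3 + C (4 - (2 : ℝ) ^ (2 * k + 1) - 2 ^ (k + 1)) * X ^ 2 +
          C (4 + 3 * (2 : ℝ) ^ (4 * k - 2) + 3 * 2 ^ (3 * k) - 23 * 2 ^ (2 * k - 2) -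
            2 ^ (k + 3)) * X +
          C (-(2 : ℝ) ^ (5 * k) + 2 ^ (4 * k - 1) + 7 * 2 ^ (3 * k) - 5 * 2 ^ (2 * k - 1) -
            2 ^ (k + 3))) ∧
    (distMatrix (pslGraph k)).charpoly.rootMultiplicity (-2) = 2 ^ (2 * k) + 2 ^ k - 2 ∧
    ∀ μ : ℝ, μ ≠ -2 →
      ((distMatrix (pslGraph k)).charpoly.IsRoot μ ↔
        μ ^ 3 + (4 - (2 : ℝ) ^ (2 * k + 1) - 2 ^ (k + 1)) * μ ^ 2 +
          (4 + 3 * (2 : ℝ) ^ (4 * k - 2) + 3 * 2 ^ (3 * k) - 23 * 2 ^ (2 * k - 2) -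
            2 ^ (k + 3)) * μ +
          (-(2 : ℝ) ^ (5 * k) + 2 ^ (4 * k - 1) + 7 * 2 ^ (3 * k) - 5 * 2 ^ (2 * k - 1) -
            2 ^ (k + 3)) = 0) := by
  obtain ⟨j, rfl⟩ : ∃ j, k = j + 2 := ⟨k - 2, by omega⟩
  clear hk
  set k := j + 2 with hk
  have ha : 0 < 2 ^ k + 1 := by positivity
  have hb : 0 < 2 ^ (k - 1) * (2 ^ k + 1) := by positivity
  have hone : (1 : ℕ) ≤ 2 ^ k := Nat.one_le_two_pow
  have hcard : 3 ≤ (2 ^ k + 1) + 2 ^ (k - 1) * (2 ^ k + 1) + 2 ^ (k - 1) * (2 ^ k - 1) := by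
    have h1 : (1:ℕ) ≤ 2 ^ (k-1) := Nat.one_le_two_pow
    nlinarith
  -- the exponent identity
  have hexp : (2 ^ k + 1) + 2 ^ (k - 1) * (2 ^ k + 1) + 2 ^ (k - 1) * (2 ^ k - 1) - 3 =
      2 ^ (2 * k) + 2 ^ k - 2 := by
    have e0 : k - 1 = j + 1 := by omega
    have e1 : 2 ^ k = 2 * 2 ^ (j + 1) := by rw [hk]; ring
    have e2 : 2 ^ (2 * k) = 4 * (2 ^ (j + 1) * 2 ^ (j + 1)) := by rw [hk]; ring
    rw [e0, e1, e2]
    have hp : (1:ℕ) ≤ 2 ^ (j + 1) := Nat.one_le_two_pow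
    set p := 2 ^ (j + 1) with hpdef
    have hq : p * (2 * p + 1) = 2 * (p * p) + p := by ring
    have hr : p * (2 * p - 1) + p = 2 * (p * p) := by
      rw [← Nat.mul_succ]
      have : (2 * p - 1).succ = 2 * p := by omega
      rw [this]; ring
    rw [hq]
    set Q := p * p with hQdef
    set R := p * (2 * p - 1) with hRdef
    omega
  -- the main charpoly identity
  have key : (distMatrix (pslGraph k)).charpoly =
      (X + C 2) ^ (2 ^ (2 * k) + 2 ^ k - 2) *
        (X ^ 3 + C (4 - (2 : ℝ) ^ (2 * k + 1) - 2 ^ (k + 1)) * X ^ 2 +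
          C (4 + 3 * (2 : ℝ) ^ (4 * k - 2) + 3 * 2 ^ (3 * k) - 23 * 2 ^ (2 * k - 2) -
            2 ^ (k + 3)) * X +
          C (-(2 : ℝ) ^ (5 * k) + 2 ^ (4 * k - 1) + 7 * 2 ^ (3 * k) - 5 * 2 ^ (2 * k - 1) -
            2 ^ (k + 3))) := by
    rw [pslGraph, tripartite_charpoly _ _ _ ha hb hcard, hexp]
    congr 1
    have eA : ((2 ^ k + 1 : ℕ) : ℝ[X]) = 2 ^ k + 1 := by push_cast; ring
    have eB : ((2 ^ (k - 1) * (2 ^ k + 1) : ℕ) : ℝ[X]) = 2 ^ (k - 1) * (2 ^ k + 1) := by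
      push_cast; ring
    have eC : ((2 ^ (k - 1) * (2 ^ k - 1) : ℕ) : ℝ[X]) = 2 ^ (k - 1) * (2 ^ k - 1) := by
      push_cast [hone]; ring
    rw [eA, eB, eC]
    simp only [map_sub, map_add, map_neg, map_mul, map_pow, map_ofNat]
    have f1 : k - 1 = j + 1 := by omega
    have f2 : 2 * k + 1 = 2 * j + 5 := by omega
    have f3 : k + 1 = j + 3 := by omega
    have f4 : 4 * k - 2 = 4 * j + 6 := by omega
    have f5 : 3 * k = 3 * j + 6 := by omega
    have f6 : 2 * k - 2 = 2 * j + 2 := by omega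
    have f7 : k + 3 = j + 5 := by omega
    have f8 : 5 * k = 5 * j + 10 := by omega
    have f9 : 4 * k - 1 = 4 * j + 7 := by omega
    have f10 : 2 * k - 1 = 2 * j + 3 := by omega
    rw [hk] at *
    rw [f1, f2, f3, f4, f5, f6, f7, f8, f9, f10]
    ring
  -- abbreviations for the cubic factor
  set Q3 : ℝ[X] :=
      X ^ 3 + C (4 - (2 : ℝ) ^ (2 * k + 1) - 2 ^ (k + 1)) * X ^ 2 +
        C (4 + 3 * (2 : ℝ) ^ (4 * k - 2) + 3 * 2 ^ (3 * k) - 23 * 2 ^ (2 * k - 2) -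
          2 ^ (k + 3)) * X +
        C (-(2 : ℝ) ^ (5 * k) + 2 ^ (4 * k - 1) + 7 * 2 ^ (3 * k) - 5 * 2 ^ (2 * k - 1) -
          2 ^ (k + 3)) with hQ3
  have hQ3eval : ∀ μ : ℝ, Q3.eval μ =
      μ ^ 3 + (4 - (2 : ℝ) ^ (2 * k + 1) - 2 ^ (k + 1)) * μ ^ 2 +
        (4 + 3 * (2 : ℝ) ^ (4 * k - 2) + 3 * 2 ^ (3 * k) - 23 * 2 ^ (2 * k - 2) -
          2 ^ (k + 3)) * μ +
        (-(2 : ℝ) ^ (5 * k) + 2 ^ (4 * k - 1) + 7 * 2 ^ (3 * k) - 5 * 2 ^ (2 * k - 1) -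
          2 ^ (k + 3)) := by
    intro μ
    simp [hQ3]
  have hQ3neg : Q3.eval (-2) < 0 := by
    rw [hQ3eval]
    have f2 : 2 * k + 1 = 2 * j + 5 := by omega
    have f4 : 4 * k - 2 = 4 * j + 6 := by omega
    have f5 : 3 * k = 3 * j + 6 := by omega
    have f6 : 2 * k - 2 = 2 * j + 2 := by omega
    have f7 : k + 3 = j + 5 := by omega
    have f8 : 5 * k = 5 * j + 10 := by omega
    have f9 : 4 * k - 1 = 4 * j + 7 := by omega
    have f10 : 2 * k - 1 = 2 * j + 3 := by omega
    have f3 : k + 1 = j + 3 := by omega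
    rw [hk] at *
    rw [f2, f3, f4, f5, f6, f7, f8, f9, f10]
    have hval : (-2:ℝ) ^ 3 + (4 - (2 : ℝ) ^ (2 * j + 5) - 2 ^ (j + 3)) * (-2) ^ 2 +
        (4 + 3 * (2 : ℝ) ^ (4 * j + 6) + 3 * 2 ^ (3 * j + 6) - 23 * 2 ^ (2 * j + 2) -
          2 ^ (j + 5)) * (-2) +
        (-(2 : ℝ) ^ (5 * j + 10) + 2 ^ (4 * j + 7) + 7 * 2 ^ (3 * j + 6) - 5 * 2 ^ (2 * j + 3) -
          2 ^ (j + 5)) =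
        -(4 * ((2:ℝ) ^ (j + 2) + 1) * (2 ^ (j + 1) * ((2:ℝ) ^ (j + 2) + 1)) *
          (2 ^ (j + 1) * ((2:ℝ) ^ (j + 2) - 1))) := by
      ring
    rw [hval]
    have h1 : (1:ℝ) < 2 ^ (j + 2) := by
      have : (2:ℝ) ^ 0 < 2 ^ (j + 2) := by
        apply pow_lt_pow_right₀ (by norm_num) (by omega)
      simpa using this
    have h2 : (0:ℝ) < 2 ^ (j + 1) := by positivity
    have hprod : 0 < 4 * ((2:ℝ) ^ (j + 2) + 1) * (2 ^ (j + 1) * ((2:ℝ) ^ (j + 2) + 1)) *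
        (2 ^ (j + 1) * ((2:ℝ) ^ (j + 2) - 1)) := by
      apply mul_pos
      apply mul_pos
      apply mul_pos <;> positivity
      · positivity
      · exact mul_pos h2 (by linarith)
    linarith
  have hQ3notroot : ¬ Q3.IsRoot (-2) := by
    rw [Polynomial.IsRoot]
    exact ne_of_lt hQ3neg
  have hQ3ne : Q3 ≠ 0 := by
    intro h
    rw [h] at hQ3neg
    exact lt_irrefl _ (by rwa [Polynomial.eval_zero] at hQ3neg)
  have hXC : (X + C (2:ℝ)) ≠ 0 := by
    intro h
    have := congrArg (Polynomial.eval 0) h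
    simp at this
  have hXCpow : (X + C (2:ℝ)) = X - C (-2) := by
    rw [map_neg, sub_neg_eq_add]
  refine ⟨key, ?_, ?_⟩
  · rw [key, Polynomial.rootMultiplicity_mul (mul_ne_zero (pow_ne_zero _ hXC) hQ3ne),
      hXCpow, Polynomial.rootMultiplicity_X_sub_C_pow,
      Polynomial.rootMultiplicity_eq_zero hQ3notroot]
    omega
  · intro μ hμ
    have hfac : μ + 2 ≠ 0 := fun h => hμ (by linarith)
    rw [Polynomial.IsRoot, key]
    rw [Polynomial.eval_mul, Polynomial.eval_pow, Polynomial.eval_add, Polynomial.eval_X,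
      Polynomial.eval_C, hQ3eval]
    constructor
    · intro h
      rcases mul_eq_zero.mp h with h' | h'
      · exact absurd h' (pow_ne_zero _ hfac)
      · exact h'
    · intro h
      rw [h, mul_zero]
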